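/- Let M be a free submodule of rank m of (ℤ/p^kℤ)^n and let v_1, …, v_m ∈ M be linearly independent over ℤ/p^kℤ. Then {v_1, …, v_m} is a basis of M. -/

import Mathlib

/-- If `M` is a free submodule of rank `m` of `(ℤ/p^kℤ)^n` and
`v_1, …, v_m ∈ M` are linearly independent over `ℤ/p^kℤ`, then
`{v_1, …, v_m}` is a basis of `M`. -/
theorem linearIndependent_is_basis_of_free_rank
    {p k m n : ℕ} (hp : p.Prime) (hk : 1 ≤ k)
    (M : Submodule (ZMod (p ^ k)) (Fin n → ZMod (p ^ k)))
    (hfree : Nonempty (M ≃ₗ[ZMod (p ^ k)] (Fin m → ZMod (p ^ k))))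
    (v : Fin m → Fin n → ZMod (p ^ k)) (hv : ∀ i, v i ∈ M)
    (hli : LinearIndependent (ZMod (p ^ k)) v) :
    ∃ b : Module.Basis (Fin m) (ZMod (p ^ k)) M,
      ∀ i, (b i : Fin n → ZMod (p ^ k)) = v i := by
  have : NeZero (p ^ k) := ⟨pow_ne_zero _ hp.ne_zero⟩
  obtain ⟨e⟩ := hfree
  set v' : Fin m → M := fun i => ⟨v i, hv i⟩ with hv'
  have hli' : LinearIndependent (ZMod (p^k)) v' := by
    apply LinearIndependent.of_comp M.subtype
    exact hli
  have hsurj : Function.Surjective (Finsupp.linearCombination (ZMod (p^k)) v') := by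
    have hequiv : (Fin m →₀ ZMod (p^k)) ≃ M :=
      (Finsupp.equivFunOnFinite.trans e.symm.toEquiv)
    exact (Finite.injective_iff_surjective_of_equiv hequiv).mp hli'
  have hspan : Submodule.span (ZMod (p^k)) (Set.range v') = ⊤ := by
    rw [← Finsupp.range_linearCombination]
    exact LinearMap.range_eq_top.mpr hsurj
  refine ⟨Module.Basis.mk hli' (le_of_eq hspan.symm), fun i => ?_⟩
  rw [Module.Basis.mk_apply]
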